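/- Let H = ⟨r_n, r_{n-l}, r_k⟩ ≤ Sym_n with n ≥ 6, 2 ≤ k, l ≥ k+1, and n - l > k. If l divides n+1, then the set Δ = {t ∈ {1,...,n} : l divides t} is invariant under H, and H is a proper subgroup of Sym_n. -/

import Mathlib

/-- The prefix reversal `r i` on positions `1..n` (0-indexed as `Fin n`):
position `x+1 ↦ i+1-(x+1)` for `x+1 ≤ i`, i.e. `x ↦ i-1-x` for `x < i`, fixing the rest. -/
def pr (n i : ℕ) : Equiv.Perm (Fin n) :=
  Function.Involutive.toPerm
    (fun x => if h : x.val < i ∧ i ≤ n then ⟨i - 1 - x.val, by omega⟩ else x)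
    (by
      intro x
      apply Fin.ext
      dsimp only
      split_ifs with h1 h2 h3 <;> simp_all <;> omega)

theorem stmt7 (n k l : ℕ) (hn : 6 ≤ n) (hk : 2 ≤ k) (hlk : k + 1 ≤ l)
    (hknl : k < n - l) (hdvd : l ∣ n + 1) :
    (∀ g ∈ Subgroup.closure ({pr n n, pr n (n - l), pr n k} : Set (Equiv.Perm (Fin n))),
      ∀ x : Fin n, l ∣ (x.val + 1) → l ∣ ((g x).val + 1)) ∧
    Subgroup.closure ({pr n n, pr n (n - l), pr n k} : Set (Equiv.Perm (Fin n))) ≠ ⊤ := by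
  have hln : l + 3 ≤ n := by omega
  have hinv : ∀ g ∈ Subgroup.closure ({pr n n, pr n (n - l), pr n k} :
      Set (Equiv.Perm (Fin n))),
      ∀ x : Fin n, l ∣ (x.val + 1) → l ∣ ((g x).val + 1) := by
    intro g hg
    induction hg using Subgroup.closure_induction with
    | mem g hgmem =>
      intro x hx
      rcases hgmem with h | h | h
      · subst h
        show l ∣ ((pr n n) x).val + 1
        show l ∣ (if h : x.val < n ∧ n ≤ n then (⟨n - 1 - x.val, by omega⟩ : Fin n) else x).val + 1
        rw [dif_pos ⟨x.isLt, le_refl n⟩]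
        have hx' : x.val < n := x.isLt
        have : n - 1 - x.val + 1 = (n + 1) - (x.val + 1) := by omega
        simp only [this]
        exact Nat.dvd_sub hdvd hx
      · subst h
        show l ∣ ((pr n (n - l)) x).val + 1
        show l ∣ (if h : x.val < n - l ∧ n - l ≤ n then (⟨n - l - 1 - x.val, by omega⟩ : Fin n) else x).val + 1
        by_cases hc : x.val < n - l ∧ n - l ≤ n
        · rw [dif_pos hc]
          have : n - l - 1 - x.val + 1 = ((n + 1) - (x.val + 1)) - l := by omega
          simp only [this]
          exact Nat.dvd_sub (Nat.dvd_sub hdvd hx) dvd_rfl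
        · rw [dif_neg hc]; exact hx
      · subst h
        show l ∣ ((pr n k) x).val + 1
        show l ∣ (if h : x.val < k ∧ k ≤ n then (⟨k - 1 - x.val, by omega⟩ : Fin n) else x).val + 1
        by_cases hc : x.val < k ∧ k ≤ n
        · exfalso
          have := Nat.le_of_dvd (by omega) hx
          omega
        · rw [dif_neg hc]; exact hx
    | one => intro x hx; simpa using hx
    | mul a b _ _ ha hb =>
      intro x hx
      have := hb x hx
      simpa using ha (b x) this
    | inv a _ ha =>
      intro x hx
      classical
      set S : Finset (Fin n) := Finset.univ.filter (fun y => l ∣ y.val + 1) with hS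
      have hmaps : Finset.image a S ⊆ S := by
        intro y hy
        simp only [hS, Finset.mem_image, Finset.mem_filter, Finset.mem_univ, true_and] at hy ⊢
        obtain ⟨z, hz, rfl⟩ := hy
        exact ha z hz
      have hcard : S.card ≤ (Finset.image a S).card := by
        rw [Finset.card_image_of_injective _ a.injective]
      have heq : Finset.image a S = S := Finset.eq_of_subset_of_card_le hmaps hcard
      have hxS : x ∈ S := by
        simp only [hS, Finset.mem_filter, Finset.mem_univ, true_and]; exact hx
      rw [← heq] at hxS
      obtain ⟨z, hz, hzx⟩ := Finset.mem_image.mp hxS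
      have : a⁻¹ x = z := by rw [← hzx]; simp
      rw [this]
      simpa [hS, Finset.mem_filter] using hz
  refine ⟨hinv, ?_⟩
  intro htop
  have h0 : (0 : ℕ) < n := by omega
  have hl1 : l - 1 < n := by omega
  set σ : Equiv.Perm (Fin n) := Equiv.swap ⟨0, h0⟩ ⟨l - 1, hl1⟩ with hσ
  have hσmem : σ ∈ Subgroup.closure ({pr n n, pr n (n - l), pr n k} :
      Set (Equiv.Perm (Fin n))) := by rw [htop]; trivial
  have hdx : l ∣ ((⟨l - 1, hl1⟩ : Fin n).val + 1) := by
    simp only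
    have : l - 1 + 1 = l := by omega
    rw [this]
  have := hinv σ hσmem ⟨l - 1, hl1⟩ hdx
  rw [hσ, Equiv.swap_apply_right] at this
  simp only at this
  have := Nat.le_of_dvd (by omega) this
  omega
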